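/- Let n = 2^{a₀}·∏ p_i^{a_i} with a₀ ≥ 1 (n even) and let q₁, q₂ be distinct odd primes. Then the 3-element set {q₁^{n/2}, q₂^{n/2}, (q₁q₂)^{n/2}} contains an n-th power in ℤ_p for almost every prime p, yet contains no perfect n-th power. -/

import Mathlib

/-- If `q` is a nonzero square mod `p` (p odd prime), then `q` is a square in `ℤ_[p]`. -/
lemma sq_lift (p : ℕ) [Fact p.Prime] (hp : p ≠ 2) (q : ℕ) (hdvd : ¬ (p ∣ q))
    (hsq : IsSquare ((q : ZMod p))) : ∃ u : ℤ_[p], u ^ 2 = (q : ℤ_[p]) := by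
  obtain ⟨s, hs⟩ := hsq
  have hs0 : s ≠ 0 := by
    rintro rfl
    rw [mul_zero] at hs
    exact hdvd ((ZMod.natCast_eq_zero_iff q p).mp hs)
  set a : ℤ_[p] := ((s.val : ℤ) : ℤ_[p]) with ha
  set F : Polynomial ℤ_[p] := Polynomial.X ^ 2 - Polynomial.C (q : ℤ_[p]) with hF
  have hevala : F.eval a = ((s.val ^ 2 - q : ℤ) : ℤ_[p]) := by
    simp [hF, ha]
  have hdvd1 : (p : ℤ) ∣ (s.val ^ 2 - q : ℤ) := by
    have : ((s.val ^ 2 - q : ℤ) : ZMod p) = 0 := by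
      push_cast
      rw [ZMod.natCast_val, ZMod.cast_id]
      rw [hs]; ring
    exact (ZMod.intCast_zmod_eq_zero_iff_dvd _ p).mp this
  have hnormeval : ‖F.eval a‖ < 1 := by
    rw [hevala, PadicInt.norm_int_lt_one_iff_dvd]
    exact hdvd1
  have hderiv : F.derivative.eval a = 2 * a := by
    simp [hF]
    exact Or.inl one_add_one_eq_two
  have hna : ‖a‖ = 1 := by
    rw [ha]
    have : ¬ ‖((s.val : ℤ) : ℤ_[p])‖ < 1 := by
      rw [PadicInt.norm_int_lt_one_iff_dvd]
      intro h
      have h' : p ∣ s.val := by exact_mod_cast h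
      have : (s.val : ZMod p) = 0 := (ZMod.natCast_eq_zero_iff _ p).mpr h'
      rw [ZMod.natCast_val, ZMod.cast_id] at this
      exact hs0 this
    have h2 := PadicInt.norm_le_one ((s.val : ℤ) : ℤ_[p])
    rcases lt_or_eq_of_le h2 with h | h
    · exact absurd h this
    · exact h
  have hn2 : ‖(2 : ℤ_[p])‖ = 1 := by
    have : ¬ ‖((2 : ℤ) : ℤ_[p])‖ < 1 := by
      rw [PadicInt.norm_int_lt_one_iff_dvd]
      intro h
      have h' : p ∣ 2 := by exact_mod_cast h
      exact hp ((Nat.prime_dvd_prime_iff_eq Fact.out Nat.prime_two).mp h')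
    have h2 := PadicInt.norm_le_one ((2 : ℤ) : ℤ_[p])
    push_cast at this h2 ⊢
    rcases lt_or_eq_of_le h2 with h | h
    · exact absurd h this
    · exact h
  have hnormderiv : ‖F.derivative.eval a‖ = 1 := by
    rw [hderiv, norm_mul, hn2, hna, one_mul]
  have hlt : ‖F.eval a‖ < ‖F.derivative.eval a‖ ^ 2 := by
    rw [hnormderiv, one_pow]
    exact hnormeval
  obtain ⟨z, hz, -⟩ := hensels_lemma hlt
  refine ⟨z, ?_⟩
  have h0 : z ^ 2 - (q : ℤ_[p]) = 0 := by
    simpa [hF] using hz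
  exact sub_eq_zero.mp h0

/-- nonsquare times nonsquare is a square in `ZMod p`. -/
lemma one_of_three_square (p : ℕ) [Fact p.Prime] (a b : ZMod p) (ha : a ≠ 0) (hb : b ≠ 0) :
    IsSquare a ∨ IsSquare b ∨ IsSquare (a * b) := by
  by_cases h1 : IsSquare a
  · exact Or.inl h1
  by_cases h2 : IsSquare b
  · exact Or.inr (Or.inl h2)
  refine Or.inr (Or.inr ?_)
  have c1 : quadraticChar (ZMod p) a = -1 := quadraticChar_neg_one_iff_not_isSquare.mpr h1
  have c2 : quadraticChar (ZMod p) b = -1 := quadraticChar_neg_one_iff_not_isSquare.mpr h2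
  have : quadraticChar (ZMod p) (a * b) = 1 := by
    rw [map_mul, c1, c2]; ring
  exact (quadraticChar_one_iff_isSquare (mul_ne_zero ha hb)).mp this

lemma not_nth_power (n : ℕ) (hn : 0 < n) (hneven : Even n) (q : ℕ) (hq : q.Prime)
    (m : ℕ) (hm : m.factorization q = 1) (hm0 : m ≠ 0) :
    ¬ ∃ r : ℕ, m ^ (n / 2) = r ^ n := by
  rintro ⟨r, hr⟩
  have hn2 : n = 2 * (n / 2) := by
    obtain ⟨k, hk⟩ := hneven; omega
  have hhalf : 0 < n / 2 := by omega
  have hr0 : r ≠ 0 := by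
    rintro rfl
    rw [zero_pow (by omega)] at hr
    exact pow_ne_zero _ hm0 hr
  have hfact := congrArg (fun x => x.factorization q) hr
  simp only [Nat.factorization_pow] at hfact
  have : (n / 2) * m.factorization q = n * r.factorization q := by
    have h2 := hfact
    simp only [Finsupp.smul_apply, smul_eq_mul] at h2
    exact h2
  rw [hm, mul_one] at this
  rcases Nat.eq_zero_or_pos (r.factorization q) with h | h
  · rw [h, mul_zero] at this; omega
  · have : n ≤ n / 2 := le_trans (Nat.le_mul_of_pos_right n h) this.symm.le
    omega

/-- Optimality for even `n`: for even `n > 0` and distinct odd primes `q₁, q₂`, the set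
`{q₁^(n/2), q₂^(n/2), (q₁q₂)^(n/2)}` contains an `n`-th power in `ℤ_p` for almost every
prime `p`, yet contains no perfect `n`-th power. -/
theorem optimality_even (n : ℕ) (hn : 0 < n) (hneven : Even n)
    (q₁ q₂ : ℕ) (hq₁ : q₁.Prime) (hq₂ : q₂.Prime)
    (hq₁odd : q₁ ≠ 2) (hq₂odd : q₂ ≠ 2) (hne : q₁ ≠ q₂) :
    (∃ S : Finset ℕ, ∀ p : ℕ, ∀ [Fact p.Prime], p ∉ S →
      ∃ c ∈ ({q₁ ^ (n / 2), q₂ ^ (n / 2), (q₁ * q₂) ^ (n / 2)} : Finset ℕ),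
        ∃ y : ℤ_[p], y ^ n = (c : ℤ_[p])) ∧
    ∀ c ∈ ({q₁ ^ (n / 2), q₂ ^ (n / 2), (q₁ * q₂) ^ (n / 2)} : Finset ℕ),
      ¬ ∃ r : ℕ, c = r ^ n := by
  have hn2 : n = 2 * (n / 2) := by
    obtain ⟨k, hk⟩ := hneven; omega
  constructor
  · refine ⟨{2, q₁, q₂}, ?_⟩
    intro p _ hp
    simp only [Finset.mem_insert, Finset.mem_singleton, not_or] at hp
    obtain ⟨hp2, hpq₁, hpq₂⟩ := hp
    have hpdvd₁ : ¬ p ∣ q₁ := fun h =>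
      hpq₁ (((Nat.prime_dvd_prime_iff_eq Fact.out hq₁).mp h))
    have hpdvd₂ : ¬ p ∣ q₂ := fun h =>
      hpq₂ (((Nat.prime_dvd_prime_iff_eq Fact.out hq₂).mp h))
    have h1 : (q₁ : ZMod p) ≠ 0 := fun h =>
      hpdvd₁ ((ZMod.natCast_eq_zero_iff q₁ p).mp h)
    have h2 : (q₂ : ZMod p) ≠ 0 := fun h =>
      hpdvd₂ ((ZMod.natCast_eq_zero_iff q₂ p).mp h)
    have key : ∀ q : ℕ, ¬ p ∣ q → IsSquare ((q : ZMod p)) →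
        ∃ y : ℤ_[p], y ^ n = ((q ^ (n / 2) : ℕ) : ℤ_[p]) := by
      intro q hq hsq
      obtain ⟨u, hu⟩ := sq_lift p hp2 q hq hsq
      refine ⟨u, ?_⟩
      push_cast
      have h' : u ^ n = (u ^ 2) ^ (n / 2) := by
        rw [← pow_mul, ← hn2]
      rw [h', hu]
    rcases one_of_three_square p (q₁ : ZMod p) (q₂ : ZMod p) h1 h2 with h | h | h
    · exact ⟨q₁ ^ (n / 2), by simp, key q₁ hpdvd₁ h⟩
    · exact ⟨q₂ ^ (n / 2), by simp, key q₂ hpdvd₂ h⟩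
    · refine ⟨(q₁ * q₂) ^ (n / 2), by simp, ?_⟩
      have hdvd : ¬ p ∣ q₁ * q₂ := by
        intro hd
        rcases (Nat.Prime.dvd_mul Fact.out).mp hd with h' | h'
        · exact hpdvd₁ h'
        · exact hpdvd₂ h'
      have hsq : IsSquare (((q₁ * q₂ : ℕ) : ZMod p)) := by push_cast; exact h
      exact key (q₁ * q₂) hdvd hsq
  · intro c hc
    simp only [Finset.mem_insert, Finset.mem_singleton] at hc
    rcases hc with rfl | rfl | rfl
    · exact not_nth_power n hn hneven q₁ hq₁ q₁ (by simp [hq₁.factorization]) hq₁.ne_zero ∘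
        (fun ⟨r, hr⟩ => ⟨r, hr⟩)
    · exact not_nth_power n hn hneven q₂ hq₂ q₂ (by simp [hq₂.factorization]) hq₂.ne_zero ∘
        (fun ⟨r, hr⟩ => ⟨r, hr⟩)
    · refine not_nth_power n hn hneven q₁ hq₁ (q₁ * q₂) ?_ (Nat.mul_ne_zero hq₁.ne_zero hq₂.ne_zero) ∘
        (fun ⟨r, hr⟩ => ⟨r, hr⟩)
      rw [Nat.factorization_mul hq₁.ne_zero hq₂.ne_zero]
      simp [hq₁.factorization, hq₂.factorization, Finsupp.single_apply, Ne.symm hne]
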